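/- For an odd prime r, the derivative of the r-th Chebyshev polynomial of the first kind satisfies d/dx T_r(x) = r·U_{r-1}(x), and U_{r-1}(x/(2i)) = i^{r-1} h(ix) h(-ix), where U_{r-1} is the (r-1)-st Chebyshev polynomial of the second kind, i^2 = -1, and h(x) = \prod_{j=1}^{(r-1)/2}(x - (ζ_r^j + ζ_r^{-j})). -/

import Mathlib

open Polynomial Finset Complex

private lemma U_eval_key (n : ℕ) (t : ℂ) (ht : t ≠ 0) :
    (t - t⁻¹) * Polynomial.eval ((t + t⁻¹) / 2) (Polynomial.Chebyshev.U ℂ (n : ℤ)) =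
      t ^ (n + 1) - t⁻¹ ^ (n + 1) := by
  have hinv : t * t⁻¹ = 1 := mul_inv_cancel₀ ht
  induction n using Nat.twoStepInduction with
  | zero => simp [Polynomial.Chebyshev.U_zero]
  | one =>
      simp only [Nat.cast_one, Polynomial.Chebyshev.U_one]
      simp only [eval_mul, eval_ofNat, eval_X]
      field_simp
      linear_combination (t * t⁻¹ + 1) * hinv
  | more n ih1 ih2 =>
      have hc : ((n + 2 : ℕ) : ℤ) = ((n : ℤ)) + 2 := by push_cast; ring
      have hc1 : ((n + 1 : ℕ) : ℤ) = ((n : ℤ)) + 1 := by push_cast; ring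
      rw [hc, Polynomial.Chebyshev.U_add_two]
      rw [hc1] at ih2
      simp only [eval_sub, eval_mul, eval_ofNat, eval_X]
      have h2 : (2 : ℂ[X]).eval ((t + t⁻¹)/2) = 2 := by simp
      linear_combination (t + t⁻¹) * ih2 - ih1 + (t ^ (n + 1) - t⁻¹ ^ (n + 1)) * hinv


private lemma prod_range_roots {r : ℕ} (hr : 0 < r) {ζ : ℂ} (hζ : IsPrimitiveRoot ζ r) (s : ℂ) :
    ∏ k ∈ Finset.range r, (s - ζ ^ k) = s ^ r - 1 := by
  haveI : NeZero r := ⟨hr.ne'⟩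
  have himg : Polynomial.nthRootsFinset r (1 : ℂ) = (Finset.range r).image (fun k => ζ ^ k) := by
    ext z
    simp only [Polynomial.mem_nthRootsFinset hr, Finset.mem_image, Finset.mem_range]
    constructor
    · intro hz
      obtain ⟨i, hi, rfl⟩ := hζ.eq_pow_of_pow_eq_one hz
      exact ⟨i, hi, rfl⟩
    · rintro ⟨i, hi, rfl⟩
      rw [← pow_mul, mul_comm, pow_mul, hζ.pow_eq_one, one_pow]
  have heval := congrArg (Polynomial.eval s) (Polynomial.X_pow_sub_one_eq_prod hr hζ)
  rw [himg, Finset.prod_image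
    (fun i hi j hj hij => hζ.pow_inj (Finset.mem_range.1 hi) (Finset.mem_range.1 hj) hij)] at heval
  simp only [eval_prod, eval_sub, eval_X, eval_C, eval_pow, eval_one] at heval
  exact heval.symm


private lemma prod_split {m : ℕ} {ζ : ℂ} (hζ : IsPrimitiveRoot ζ (2 * m + 1)) (s : ℂ) :
    ∏ k ∈ Finset.Icc 1 (2 * m), (s - ζ ^ k) =
      (∏ j ∈ Finset.Icc 1 m, (s - ζ ^ (2 * j))) * ∏ j ∈ Finset.Icc 1 m, (s - ζ⁻¹ ^ (2 * j)) := by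
  have hsplit := Finset.prod_filter_mul_prod_filter_not (Finset.Icc 1 (2 * m))
    (fun k => k % 2 = 0) (fun k => (s - ζ ^ k))
  rw [← hsplit]
  congr 1
  · have himg : (Finset.Icc 1 (2 * m)).filter (fun k => k % 2 = 0)
        = (Finset.Icc 1 m).image (fun j => 2 * j) := by
      ext k
      simp only [Finset.mem_filter, Finset.mem_image, Finset.mem_Icc]
      constructor
      · rintro ⟨⟨h1, h2⟩, h3⟩; exact ⟨k / 2, by omega, by omega⟩
      · rintro ⟨j, hj, rfl⟩; omega
    rw [himg, Finset.prod_image (fun i _ j _ h => by omega)]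
  · have himg : (Finset.Icc 1 (2 * m)).filter (fun k => ¬ k % 2 = 0)
        = (Finset.Icc 1 m).image (fun j => 2 * m + 1 - 2 * j) := by
      ext k
      simp only [Finset.mem_filter, Finset.mem_image, Finset.mem_Icc]
      constructor
      · rintro ⟨⟨h1, h2⟩, h3⟩; exact ⟨(2 * m + 1 - k) / 2, by omega, by omega⟩
      · rintro ⟨j, hj, rfl⟩; omega
    rw [himg, Finset.prod_image (fun i hi j hj h => by
      simp only [Finset.mem_coe, Finset.mem_Icc] at hi hj; omega)]
    refine Finset.prod_congr rfl fun j hj => ?_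
    simp only [Finset.mem_Icc] at hj
    have hpow : ζ ^ (2 * m + 1 - 2 * j) * ζ ^ (2 * j) = 1 := by
      rw [← pow_add]
      have : 2 * m + 1 - 2 * j + 2 * j = 2 * m + 1 := by omega
      rw [this, hζ.pow_eq_one]
    rw [inv_pow, eq_inv_of_mul_eq_one_left hpow]

private lemma core (m : ℕ) (ζ : ℂ) (hζ : IsPrimitiveRoot ζ (2 * m + 1)) (y : ℂ)
    (hy1 : y ≠ 2 * I) (hy2 : y ≠ -(2 * I)) :
    Polynomial.eval ((2 * I)⁻¹ * y) (Polynomial.Chebyshev.U ℂ ((2 * m : ℕ) : ℤ)) =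
      I ^ (2 * m) * (∏ j ∈ Finset.Icc 1 m, (I * y - (ζ ^ j + ζ⁻¹ ^ j))) *
        (∏ j ∈ Finset.Icc 1 m, (-I * y - (ζ ^ j + ζ⁻¹ ^ j))) := by
  have hζ0 : ζ ≠ 0 := fun h => by simpa [h, pow_succ] using hζ.pow_eq_one
  obtain ⟨a, ha⟩ : ∃ a : ℂ, a = -(I * y) := ⟨_, rfl⟩
  obtain ⟨t, hq⟩ : ∃ t : ℂ, t ^ 2 - a * t + 1 = 0 := by
    obtain ⟨d, hd⟩ := IsAlgClosed.exists_pow_nat_eq (a ^ 2 - 4) (n := 2) (by norm_num)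
    exact ⟨(a + d) / 2, by linear_combination hd / 4⟩
  have ht0 : t ≠ 0 := by
    intro h; rw [h] at hq; simp at hq
  have hinv : t * t⁻¹ = 1 := mul_inv_cancel₀ ht0
  have hsum : t + t⁻¹ = a := by
    field_simp
    linear_combination hq
  have ht2 : t ^ 2 ≠ 1 := by
    intro h
    have : (t - 1) * (t + 1) = 0 := by linear_combination h
    have hy : y = I * a := by
      rw [ha]; linear_combination y * Complex.I_sq
    rcases mul_eq_zero.1 this with h1 | h1
    · have hteq : t = 1 := sub_eq_zero.1 h1
      rw [hteq] at hq
      have hA : a = 2 := by linear_combination -hq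
      exact hy1 (by linear_combination I * (ha.symm.trans hA) + y * Complex.I_sq)
    · have hteq : t = -1 := eq_neg_of_add_eq_zero_left h1
      rw [hteq] at hq
      have hA : a = -2 := by linear_combination hq
      exact hy2 (by linear_combination I * (ha.symm.trans hA) + y * Complex.I_sq)
  have htm1 : t ^ 2 - 1 ≠ 0 := sub_ne_zero.2 ht2
  have htt : t - t⁻¹ ≠ 0 := by
    intro h
    apply ht2
    have he : t = t⁻¹ := sub_eq_zero.1 h
    calc t ^ 2 = t * t := sq t
      _ = t * t⁻¹ := by rw [← he]
      _ = 1 := hinv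
  have h2I : ((2 * I)⁻¹ : ℂ) = -I / 2 := by
    refine inv_eq_of_mul_eq_one_right ?_
    linear_combination -Complex.I_sq
  have hpt : (2 * I)⁻¹ * y = (t + t⁻¹) / 2 := by
    rw [h2I, hsum, ha]; ring
  have hU := U_eval_key (2 * m) t ht0
  -- the big product B
  obtain ⟨B, hBdef⟩ : ∃ B : ℂ, B = ∏ k ∈ Finset.Icc 1 (2 * m), (t ^ 2 - ζ ^ k) := ⟨_, rfl⟩
  have hrange : Finset.range (2 * m + 1) = insert 0 (Finset.Icc 1 (2 * m)) := by
    ext k; simp [Finset.mem_Icc]; omega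
  have hB : (t ^ 2 - 1) * B = (t ^ 2) ^ (2 * m + 1) - 1 := by
    have hroots := prod_range_roots (by omega : 0 < 2 * m + 1) hζ (t ^ 2)
    rw [hrange, Finset.prod_insert (by simp), ← hBdef] at hroots
    simpa using hroots
  have hBval : B = ((t ^ 2) ^ (2 * m + 1) - 1) / (t ^ 2 - 1) := by
    rw [eq_div_iff htm1]; linear_combination hB
  -- per-factor identity
  have hfac : ∀ j ∈ Finset.Icc 1 m, (ζ ^ j + ζ⁻¹ ^ j) ^ 2 - a ^ 2
      = -((t ^ 2 - ζ ^ (2 * j)) * (t ^ 2 - ζ⁻¹ ^ (2 * j))) / t ^ 2 := by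
    intro j _
    have huv : ζ ^ j * ζ⁻¹ ^ j = 1 := by rw [← mul_pow, mul_inv_cancel₀ hζ0, one_pow]
    have e1 : ζ ^ (2 * j) = (ζ ^ j) ^ 2 := by rw [mul_comm, pow_mul]
    have e2 : ζ⁻¹ ^ (2 * j) = (ζ⁻¹ ^ j) ^ 2 := by rw [mul_comm, pow_mul]
    rw [← hsum, e1, e2, eq_div_iff (pow_ne_zero 2 ht0)]
    linear_combination (2 * t ^ 2 + t ^ 2 * (t * t⁻¹) + t ^ 2) * huv
      - (2 * t ^ 2 * (ζ ^ j * ζ⁻¹ ^ j) + t ^ 2 + t * t⁻¹ * t ^ 2) * hinv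
      + (ζ ^ j * ζ⁻¹ ^ j + 1 - 3 * t ^ 2 + t ^ 3 * t⁻¹) * huv
      + (t ^ 2 - 1) * (t * t⁻¹ + 1) * hinv
  -- RHS value
  have hIya : I * y = -a := by rw [ha]; ring
  have hIya' : -I * y = a := by rw [ha]; ring
  have hR : I ^ (2 * m) * (∏ j ∈ Finset.Icc 1 m, (I * y - (ζ ^ j + ζ⁻¹ ^ j))) *
      (∏ j ∈ Finset.Icc 1 m, (-I * y - (ζ ^ j + ζ⁻¹ ^ j))) = B / (t ^ 2) ^ m := by
    have hI2m : (I : ℂ) ^ (2 * m) = (-1) ^ m := by rw [pow_mul, Complex.I_sq]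
    simp only [hIya, hIya']
    rw [hI2m, mul_assoc, ← Finset.prod_mul_distrib]
    have step1 : ∀ j ∈ Finset.Icc 1 m, (-a - (ζ ^ j + ζ⁻¹ ^ j)) * (a - (ζ ^ j + ζ⁻¹ ^ j))
        = ((ζ ^ j + ζ⁻¹ ^ j) ^ 2 - a ^ 2) := fun j _ => by ring
    rw [Finset.prod_congr rfl step1, Finset.prod_congr rfl hfac]
    have step2 : ∀ j ∈ Finset.Icc 1 m, -((t ^ 2 - ζ ^ (2 * j)) * (t ^ 2 - ζ⁻¹ ^ (2 * j))) / t ^ 2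
        = (-1) * (((t ^ 2 - ζ ^ (2 * j)) * (t ^ 2 - ζ⁻¹ ^ (2 * j))) / t ^ 2) := fun j _ => by ring
    rw [Finset.prod_congr rfl step2, Finset.prod_mul_distrib, Finset.prod_const,
      Nat.card_Icc, Finset.prod_div_distrib, Finset.prod_const, Nat.card_Icc]
    simp only [Nat.add_sub_cancel]
    rw [← mul_assoc, ← mul_pow]
    norm_num
    congr 1
    simp only [← inv_pow]
    rw [Finset.prod_mul_distrib, ← prod_split hζ (t ^ 2), ← hBdef]
  rw [hpt, hR]
  -- conclude
  apply mul_left_cancel₀ htt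
  rw [hU, hBval, inv_pow]
  rw [div_div]
  field_simp
  ring

theorem chebyshev_derivative_and_U_factorization (r : ℕ) (hr : r.Prime) (hodd : Odd r)
    (ζ : ℂ) (hζ : IsPrimitiveRoot ζ r) :
    Polynomial.derivative (Polynomial.Chebyshev.T ℂ (r : ℤ)) =
        Polynomial.C (r : ℂ) * Polynomial.Chebyshev.U ℂ ((r : ℤ) - 1) ∧
      ∀ x : ℂ, Polynomial.eval (x / (2 * Complex.I)) (Polynomial.Chebyshev.U ℂ ((r : ℤ) - 1)) =
        Complex.I ^ (r - 1) *
          (∏ j ∈ Finset.Icc 1 ((r - 1) / 2), (Complex.I * x - (ζ ^ j + ζ⁻¹ ^ j))) *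
          (∏ j ∈ Finset.Icc 1 ((r - 1) / 2), (-Complex.I * x - (ζ ^ j + ζ⁻¹ ^ j))) := by
  obtain ⟨m, hm⟩ : ∃ m, r = 2 * m + 1 := by
    obtain ⟨k, hk⟩ := hodd; exact ⟨k, by omega⟩
  constructor
  · rw [Polynomial.Chebyshev.T_derivative_eq_U]
    congr 1
  · subst hm
    have h1 : (2 * m + 1 - 1) / 2 = m := by omega
    have h2 : 2 * m + 1 - 1 = 2 * m := by omega
    have h3 : ((2 * m + 1 : ℕ) : ℤ) - 1 = ((2 * m : ℕ) : ℤ) := by push_cast; ring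
    rw [h1, h2, h3]
    -- polynomial identity
    set P : Polynomial ℂ := (Polynomial.Chebyshev.U ℂ ((2 * m : ℕ) : ℤ)).comp
      (Polynomial.C (2 * I)⁻¹ * Polynomial.X) with hP
    set Q : Polynomial ℂ := Polynomial.C (I ^ (2 * m)) *
        (∏ j ∈ Finset.Icc 1 m, (Polynomial.C I * Polynomial.X - Polynomial.C (ζ ^ j + ζ⁻¹ ^ j))) *
        (∏ j ∈ Finset.Icc 1 m, (Polynomial.C (-I) * Polynomial.X - Polynomial.C (ζ ^ j + ζ⁻¹ ^ j)))
      with hQ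
    have hPeval : ∀ y : ℂ, P.eval y
        = Polynomial.eval ((2 * I)⁻¹ * y) (Polynomial.Chebyshev.U ℂ ((2 * m : ℕ) : ℤ)) := by
      intro y; rw [hP, Polynomial.eval_comp]; simp
    have hQeval : ∀ y : ℂ, Q.eval y
        = I ^ (2 * m) * (∏ j ∈ Finset.Icc 1 m, (I * y - (ζ ^ j + ζ⁻¹ ^ j))) *
          (∏ j ∈ Finset.Icc 1 m, (-I * y - (ζ ^ j + ζ⁻¹ ^ j))) := by
      intro y; rw [hQ]; simp [Polynomial.eval_prod]
    have hPQ : P = Q := by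
      have hzero : P - Q = 0 := by
        apply Polynomial.eq_zero_of_infinite_isRoot
        apply Set.Infinite.mono (s := ({2 * I, -(2 * I)}ᶜ : Set ℂ))
        · intro y hy
          simp only [Set.mem_compl_iff, Set.mem_insert_iff, Set.mem_singleton_iff, not_or] at hy
          have := core m ζ hζ y hy.1 hy.2
          simp only [Set.mem_setOf_eq, Polynomial.IsRoot, Polynomial.eval_sub,
            hPeval, hQeval, this, sub_self]
        · apply Set.Finite.infinite_compl
          exact (Set.finite_singleton _).insert _
      linear_combination (norm := abel) hzero
    intro x
    have hx : x / (2 * I) = (2 * I)⁻¹ * x := by rw [div_eq_mul_inv, mul_comm]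
    rw [hx, ← hPeval x, hPQ, hQeval x]
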